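/- Let C ⊆ ℝⁿ be a nonempty closed convex set and f : ℝⁿ → ℝ be continuously differentiable and convex, with ∇f L-Lipschitz on C (L > 0) and satisfying condition (B) on C. Let (x^k), (p^k), (v_k) be Frank–Wolfe sequences for f on C with v_k < 0 for all k. Then every cluster point x* of (x^k) is a solution of the problem min_{z∈C} f(z), i.e., f(x*) ≤ f(z) for all z ∈ C. -/

import Mathlib

open scoped RealInnerProductSpace
open Filter Topology

section FWHelpers
variable {n : ℕ}



/-- Directional derivative along a line, expressed via the gradient. -/
lemma fw_hasDerivAt_line {f : EuclideanSpace ℝ (Fin n) → ℝ} (hf : Differentiable ℝ f)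
    (x d : EuclideanSpace ℝ (Fin n)) (t : ℝ) :
    HasDerivAt (fun s : ℝ => f (x + s • d)) ⟪gradient f (x + t • d), d⟫ t := by
  have h1 : HasDerivAt (fun s : ℝ => x + s • d) d t := by
    simpa using ((hasDerivAt_id t).smul_const d).const_add x
  have h2 := ((hf (x + t • d)).hasGradientAt.hasFDerivAt).comp_hasDerivAt t h1
  exact h2

/-- Gradient inequality for convex functions. -/
lemma fw_grad_ineq {f : EuclideanSpace ℝ (Fin n) → ℝ} (hf : Differentiable ℝ f)
    (hconv : ConvexOn ℝ Set.univ f) (a b : EuclideanSpace ℝ (Fin n)) :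
    ⟪gradient f a, b - a⟫ ≤ f b - f a := by
  set g : ℝ → ℝ := fun s => f (a + s • (b - a)) with hg
  have hd : HasDerivAt g ⟪gradient f a, b - a⟫ 0 := by
    simpa using fw_hasDerivAt_line hf a (b - a) 0
  have hslope : Tendsto (slope g 0) (𝓝[>] (0:ℝ)) (𝓝 ⟪gradient f a, b - a⟫) :=
    (hasDerivAt_iff_tendsto_slope.1 hd).mono_left
      (nhdsWithin_mono 0 (fun t ht => ne_of_gt ht))
  refine le_of_tendsto hslope ?_
  filter_upwards [Ioc_mem_nhdsGT one_pos] with t ht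
  have ht0 : 0 < t := ht.1
  have ht1 : t ≤ 1 := ht.2
  have hcomb : f (a + t • (b - a)) ≤ (1 - t) * f a + t * f b := by
    have h := hconv.2 (Set.mem_univ a) (Set.mem_univ b)
      (by linarith : (0:ℝ) ≤ 1 - t) ht0.le (by ring)
    have heq : a + t • (b - a) = (1 - t) • a + t • b := by module
    rw [heq]; simpa [smul_eq_mul] using h
  have : g t - g 0 ≤ t * (f b - f a) := by
    have hg0 : g 0 = f a := by simp [hg]
    have hgt : g t = f (a + t • (b - a)) := rfl
    rw [hg0, hgt]; nlinarith
  have : slope g 0 t = (g t - g 0) / t := by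
    rw [slope_def_field]; ring_nf
  rw [this]
  rw [div_le_iff₀ ht0]
  linarith



/-- Descent lemma: quadratic upper bound from Lipschitz gradient along a segment. -/
lemma fw_descent {f : EuclideanSpace ℝ (Fin n) → ℝ} (hf : ContDiff ℝ 1 f)
    {C : Set (EuclideanSpace ℝ (Fin n))} {L : ℝ}
    (hLip : ∀ a ∈ C, ∀ b ∈ C, ‖gradient f a - gradient f b‖ ≤ L * ‖a - b‖)
    {x d : EuclideanSpace ℝ (Fin n)} (hseg : ∀ t : ℝ, t ∈ Set.Icc 0 1 → x + t • d ∈ C) :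
    f (x + d) ≤ f x + ⟪gradient f x, d⟫ + L / 2 * ‖d‖ ^ 2 := by
  have hdiff : Differentiable ℝ f := hf.differentiable one_ne_zero
  set c : ℝ := ⟪gradient f x, d⟫ with hc
  set K : ℝ := L * ‖d‖ ^ 2 with hK
  set g : ℝ → ℝ := fun t => f (x + t • d) - (c * t + K / 2 * t ^ 2) with hg
  have hgd : ∀ t : ℝ, HasDerivAt g (⟪gradient f (x + t • d), d⟫ - (c + K * t)) t := by
    intro t
    have h1 : HasDerivAt (fun s : ℝ => f (x + s • d)) ⟪gradient f (x + t • d), d⟫ t := by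
      have h1' : HasDerivAt (fun s : ℝ => x + s • d) d t := by
        simpa using ((hasDerivAt_id t).smul_const d).const_add x
      have h2 := ((hdiff (x + t • d)).hasGradientAt.hasFDerivAt).comp_hasDerivAt t h1'
      exact h2
    have h2 : HasDerivAt (fun t : ℝ => c * t + K / 2 * t ^ 2) (c + K * t) t := by
      have := ((hasDerivAt_id t).const_mul c).add
        (((hasDerivAt_pow 2 t)).const_mul (K / 2))
      refine this.congr_deriv ?_
      ring
    exact h1.sub h2
  have hanti : AntitoneOn g (Set.Icc 0 1) := by
    apply antitoneOn_of_deriv_nonpos (convex_Icc 0 1)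
    · exact fun t _ => ((hgd t).continuousAt).continuousWithinAt
    · exact fun t _ => ((hgd t).differentiableAt).differentiableWithinAt
    · intro t ht
      rw [interior_Icc] at ht
      rw [(hgd t).deriv]
      have hmem : x + t • d ∈ C := hseg t ⟨ht.1.le, ht.2.le⟩
      have hmem0 : x ∈ C := by simpa using hseg 0 ⟨le_refl 0, zero_le_one⟩
      have hi : ⟪gradient f (x + t • d), d⟫ - c = ⟪gradient f (x + t • d) - gradient f x, d⟫ := by
        rw [hc, inner_sub_left]
      have hb : ⟪gradient f (x + t • d) - gradient f x, d⟫ ≤ K * t := by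
        calc ⟪gradient f (x + t • d) - gradient f x, d⟫
            ≤ ‖gradient f (x + t • d) - gradient f x‖ * ‖d‖ := real_inner_le_norm _ _
          _ ≤ (L * ‖(x + t • d) - x‖) * ‖d‖ := by
              have := hLip _ hmem _ hmem0
              have hd0 : (0:ℝ) ≤ ‖d‖ := norm_nonneg _
              nlinarith [this]
          _ = K * t := by
              rw [hK]
              have : (x + t • d) - x = t • d := by abel
              rw [this, norm_smul]
              simp [abs_of_pos ht.1]
              ring
      nlinarith [hi, hb]
  have h01 := hanti (Set.left_mem_Icc.2 zero_le_one) (Set.right_mem_Icc.2 zero_le_one) zero_le_one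
  have hg0 : g 0 = f x := by simp [hg]
  have hg1 : g 1 = f (x + d) - (c + K / 2) := by simp [hg]
  rw [hg0, hg1] at h01
  rw [hK] at h01
  linarith
lemma fw_grad_cont {n : ℕ} {f : EuclideanSpace ℝ (Fin n) → ℝ} (hf : ContDiff ℝ 1 f) :
    Continuous (gradient f) := by
  have h : Continuous (fderiv ℝ f) := hf.continuous_fderiv one_ne_zero
  exact (InnerProductSpace.toDual ℝ _).symm.continuous.comp h

end FWHelpers

/-- If `f` is moreover convex, every cluster point of a Frank–Wolfe sequence is a solution
of the problem of minimizing `f` over `C`. -/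
theorem frank_wolfe_cluster_point_solution (n : ℕ) (C : Set (EuclideanSpace ℝ (Fin n)))
    (hCne : C.Nonempty) (hCcl : IsClosed C) (hCconv : Convex ℝ C)
    (f : EuclideanSpace ℝ (Fin n) → ℝ) (hf : ContDiff ℝ 1 f)
    (hconv : ConvexOn ℝ Set.univ f)
    (L : ℝ) (hL : 0 < L)
    (hLip : ∀ a ∈ C, ∀ b ∈ C, ‖gradient f a - gradient f b‖ ≤ L * ‖a - b‖)
    (hB : ∀ a ∈ C, ∀ d : EuclideanSpace ℝ (Fin n),
      (∀ y ∈ C, ∀ t : ℝ, 0 ≤ t → y + t • d ∈ C) → d ≠ 0 → 0 < ⟪gradient f a, d⟫)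
    (x p : ℕ → EuclideanSpace ℝ (Fin n)) (v : ℕ → ℝ)
    (hx0 : x 0 ∈ C) (hpC : ∀ k, p k ∈ C)
    (hpmin : ∀ k, ∀ q ∈ C, ⟪gradient f (x k), p k - x k⟫ ≤ ⟪gradient f (x k), q - x k⟫)
    (hv : ∀ k, v k = ⟪gradient f (x k), p k - x k⟫)
    (hiter : ∀ k, x (k + 1) =
      x k + (min 1 (|v k| / (L * ‖p k - x k‖ ^ 2))) • (p k - x k))
    (hvneg : ∀ k, v k < 0)
    (xstar : EuclideanSpace ℝ (Fin n))
    (hcluster : ∃ φ : ℕ → ℕ, StrictMono φ ∧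
      Filter.Tendsto (fun j => x (φ j)) Filter.atTop (nhds xstar)) :
    xstar ∈ C ∧ ∀ z ∈ C, f xstar ≤ f z := by
  have hdiff : Differentiable ℝ f := hf.differentiable one_ne_zero
  have hgc : Continuous (gradient f) := fw_grad_cont hf
  set lam : ℕ → ℝ := fun k => min 1 (|v k| / (L * ‖p k - x k‖ ^ 2)) with hlamdef
  -- p k ≠ x k
  have hdne : ∀ k, p k - x k ≠ 0 := by
    intro k h
    have := hv k
    rw [h, inner_zero_right] at this
    exact absurd this (hvneg k).ne
  have hnormpos : ∀ k, 0 < ‖p k - x k‖ := fun k => norm_pos_iff.2 (hdne k)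
  have hvabs : ∀ k, 0 < |v k| := fun k => abs_pos.2 (hvneg k).ne
  have hlampos : ∀ k, 0 < lam k := by
    intro k
    exact lt_min one_pos (div_pos (hvabs k) (mul_pos hL (pow_pos (hnormpos k) 2)))
  have hlamle1 : ∀ k, lam k ≤ 1 := fun k => min_le_left _ _
  -- the iterates stay in C
  have hxC : ∀ k, x k ∈ C := by
    intro k
    induction k with
    | zero => exact hx0
    | succ k ih =>
      rw [hiter k]
      exact hCconv.add_smul_sub_mem ih (hpC k) ⟨(hlampos k).le, hlamle1 k⟩
  -- descent step
  have hdesc : ∀ k, f (x (k + 1)) ≤ f (x k) + lam k * v k / 2 := by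
    intro k
    have hseg : ∀ t : ℝ, t ∈ Set.Icc 0 1 → x k + t • (lam k • (p k - x k)) ∈ C := by
      intro t ht
      rw [smul_smul]
      refine hCconv.add_smul_sub_mem (hxC k) (hpC k) ⟨?_, ?_⟩
      · exact mul_nonneg ht.1 (hlampos k).le
      · calc t * lam k ≤ 1 * 1 := mul_le_mul ht.2 (hlamle1 k) (hlampos k).le zero_le_one
          _ = 1 := mul_one 1
    have h := fw_descent hf hLip hseg
    rw [hiter k]
    have hinner : ⟪gradient f (x k), lam k • (p k - x k)⟫ = lam k * v k := by
      rw [real_inner_smul_right, ← hv k]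
    have hnorm : ‖lam k • (p k - x k)‖ ^ 2 = lam k ^ 2 * ‖p k - x k‖ ^ 2 := by
      rw [norm_smul, Real.norm_eq_abs, abs_of_pos (hlampos k)]
      ring
    rw [hinner, hnorm] at h
    -- L/2 * lam^2 * ‖d‖^2 ≤ lam * |v| / 2 = -lam*v/2
    have hmin : lam k ≤ |v k| / (L * ‖p k - x k‖ ^ 2) := min_le_right _ _
    have hkey : L / 2 * (lam k ^ 2 * ‖p k - x k‖ ^ 2) ≤ lam k * (-v k) / 2 := by
      have h1 : lam k * (L * ‖p k - x k‖ ^ 2) ≤ |v k| := by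
        rw [div_eq_mul_inv] at hmin
        have hpos : (0:ℝ) < L * ‖p k - x k‖ ^ 2 := mul_pos hL (pow_pos (hnormpos k) 2)
        calc lam k * (L * ‖p k - x k‖ ^ 2)
            ≤ (|v k| * (L * ‖p k - x k‖ ^ 2)⁻¹) * (L * ‖p k - x k‖ ^ 2) :=
              mul_le_mul_of_nonneg_right hmin hpos.le
          _ = |v k| := by rw [inv_mul_cancel_right₀ hpos.ne']
      have habs : |v k| = -v k := abs_of_neg (hvneg k)
      nlinarith [hlampos k, h1]
    linarith
  -- f (x k) is antitone
  have hmono : Antitone fun k => f (x k) := by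
    apply antitone_nat_of_succ_le
    intro k
    have h := hdesc k
    have h2 : lam k * v k < 0 := mul_neg_of_pos_of_neg (hlampos k) (hvneg k)
    show f (x (k+1)) ≤ f (x k)
    linarith
  obtain ⟨φ, hφ, hxφ⟩ := hcluster
  have hxstarC : xstar ∈ C :=
    hCcl.mem_of_tendsto hxφ (Eventually.of_forall fun j => hxC (φ j))
  refine ⟨hxstarC, ?_⟩
  -- f(x k) → f xstar
  have hfφ : Tendsto (fun j => f (x (φ j))) atTop (𝓝 (f xstar)) :=
    (hf.continuous.tendsto xstar).comp hxφ
  have hfx : Tendsto (fun k => f (x k)) atTop (𝓝 (f xstar)) := by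
    rcases tendsto_of_antitone hmono with h | ⟨l, hl⟩
    · exact absurd (h.comp hφ.tendsto_atTop) (not_tendsto_atBot_of_tendsto_nhds hfφ)
    · have h2 := hl.comp hφ.tendsto_atTop
      obtain rfl : l = f xstar := tendsto_nhds_unique h2 hfφ
      exact hl
  -- the per-step decrease tends to 0
  have hlamv : Tendsto (fun k => lam k * |v k|) atTop (𝓝 0) := by
    have hub : ∀ k, lam k * |v k| ≤ 2 * (f (x k) - f (x (k + 1))) := by
      intro k
      have h := hdesc k
      have habs : lam k * |v k| = -(lam k * v k) := by
        rw [abs_of_neg (hvneg k)]; ring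
      linarith
    have h0 : ∀ k, 0 ≤ lam k * |v k| :=
      fun k => mul_nonneg (hlampos k).le (abs_nonneg _)
    have hh : Tendsto (fun k => 2 * (f (x k) - f (x (k + 1)))) atTop (𝓝 0) := by
      have h2 : Tendsto (fun k => f (x (k + 1))) atTop (𝓝 (f xstar)) :=
        hfx.comp (tendsto_add_atTop_nat 1)
      have := (hfx.sub h2).const_mul (2:ℝ)
      simpa using this
    exact squeeze_zero h0 hub hh
  -- suppose the conclusion fails
  intro z hz
  by_contra hlt
  push_neg at hlt
  set ε : ℝ := f xstar - f z with hε
  have hεpos : 0 < ε := by rw [hε]; linarith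
  -- gradient inequality at xstar
  have hgi : ⟪gradient f xstar, z - xstar⟫ ≤ -ε := by
    have h := fw_grad_ineq hdiff hconv xstar z
    rw [hε]; linarith
  -- limit of the linearized gaps
  have hvlim : Tendsto (fun j => ⟪gradient f (x (φ j)), z - x (φ j)⟫) atTop
      (𝓝 ⟪gradient f xstar, z - xstar⟫) :=
    ((hgc.tendsto xstar).comp hxφ).inner (tendsto_const_nhds.sub hxφ)
  have hvev : ∀ᶠ j in atTop, v (φ j) ≤ -(ε / 2) := by
    have h1 : ∀ᶠ j in atTop, ⟪gradient f (x (φ j)), z - x (φ j)⟫ < -(ε / 2) := by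
      apply hvlim.eventually_lt_const
      linarith
    filter_upwards [h1] with j hj
    have := hpmin (φ j) z hz
    rw [← hv (φ j)] at this
    linarith
  -- norms blow up along the subsequence
  have hnorminf : Tendsto (fun j => ‖p (φ j) - x (φ j)‖) atTop atTop := by
    have hlamvφ : Tendsto (fun j => lam (φ j) * |v (φ j)|) atTop (𝓝 0) :=
      hlamv.comp hφ.tendsto_atTop
    rw [tendsto_atTop]
    intro b
    set b' : ℝ := max b 1 with hb'
    have hb'pos : (0:ℝ) < b' := lt_of_lt_of_le one_pos (le_max_right _ _)
    set c : ℝ := (ε / 2) * min 1 ((ε / 2) / (L * b' ^ 2)) with hcdef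
    have hcpos : 0 < c := by
      apply mul_pos (by linarith)
      exact lt_min one_pos (div_pos (by linarith) (mul_pos hL (pow_pos hb'pos 2)))
    filter_upwards [hlamvφ.eventually (gt_mem_nhds hcpos), hvev] with j hj1 hj2
    by_contra hcon
    push_neg at hcon
    have hdb : ‖p (φ j) - x (φ j)‖ ≤ b' := le_trans hcon.le (le_max_left _ _)
    have hvj : ε / 2 ≤ |v (φ j)| := by
      rw [abs_of_neg (hvneg (φ j))]; linarith
    have hdiv : (ε / 2) / (L * b' ^ 2) ≤ |v (φ j)| / (L * ‖p (φ j) - x (φ j)‖ ^ 2) := by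
      apply div_le_div₀ (abs_nonneg _) hvj
        (mul_pos hL (pow_pos (hnormpos (φ j)) 2))
      apply mul_le_mul_of_nonneg_left _ hL.le
      exact pow_le_pow_left₀ (norm_nonneg _) hdb 2
    have hlamge : min 1 ((ε / 2) / (L * b' ^ 2)) ≤ lam (φ j) :=
      min_le_min (le_refl 1) hdiv
    have : c ≤ lam (φ j) * |v (φ j)| := by
      rw [hcdef, mul_comm]
      exact mul_le_mul hlamge hvj (by linarith) (hlampos (φ j)).le
    linarith
  -- compactness: a limiting unit direction
  set u : ℕ → EuclideanSpace ℝ (Fin n) :=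
    fun j => ‖p (φ j) - x (φ j)‖⁻¹ • (p (φ j) - x (φ j)) with hu
  have hu1 : ∀ j, ‖u j‖ = 1 := fun j => norm_smul_inv_norm (hdne (φ j))
  have husph : ∀ j, u j ∈ Metric.sphere (0 : EuclideanSpace ℝ (Fin n)) 1 := by
    intro j
    simp [mem_sphere_zero_iff_norm, hu1 j]
  obtain ⟨w, hw, ψ, hψ, huψ⟩ := (isCompact_sphere (0 : EuclideanSpace ℝ (Fin n)) 1).tendsto_subseq husph
  have hwnorm : ‖w‖ = 1 := by simpa [mem_sphere_zero_iff_norm] using hw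
  have hwne : w ≠ 0 := by
    intro h; rw [h, norm_zero] at hwnorm; exact one_ne_zero hwnorm.symm
  set N : ℕ → ℝ := fun j => ‖p (φ (ψ j)) - x (φ (ψ j))‖ with hN
  have hNinf : Tendsto N atTop atTop := hnorminf.comp hψ.tendsto_atTop
  have hNpos : ∀ j, 0 < N j := fun j => hnormpos (φ (ψ j))
  -- w is a recession direction of C
  have hrec : ∀ y ∈ C, ∀ t : ℝ, 0 ≤ t → y + t • w ∈ C := by
    intro y hy t ht
    rcases eq_or_lt_of_le ht with rfl | htpos
    · simpa using hy
    have hcj : Tendsto (fun j => y + t • u (ψ j) + (t / N j) • (x (φ (ψ j)) - y))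
        atTop (𝓝 (y + t • w)) := by
      have h1 : Tendsto (fun j => t • u (ψ j)) atTop (𝓝 (t • w)) := huψ.const_smul t
      have h2 : Tendsto (fun j => t / N j) atTop (𝓝 0) := by
        have := hNinf.inv_tendsto_atTop.const_mul t
        simpa [div_eq_mul_inv] using this
      have h3 : Tendsto (fun j => x (φ (ψ j)) - y) atTop (𝓝 (xstar - y)) :=
        (hxφ.comp hψ.tendsto_atTop).sub tendsto_const_nhds
      have h4 : Tendsto (fun j => (t / N j) • (x (φ (ψ j)) - y)) atTop
          (𝓝 ((0:ℝ) • (xstar - y))) := h2.smul h3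
      rw [zero_smul] at h4
      have := (tendsto_const_nhds (x := y)).add h1 |>.add h4
      simpa using this
    have hid : ∀ j, y + t • u (ψ j) + (t / N j) • (x (φ (ψ j)) - y)
        = y + (t / N j) • (p (φ (ψ j)) - y) := by
      intro j
      have htu : t • u (ψ j) = (t / N j) • (p (φ (ψ j)) - x (φ (ψ j))) := by
        rw [hu, smul_smul, div_eq_mul_inv]
      rw [htu, add_assoc, ← smul_add]
      congr 2
      abel
    rw [Filter.tendsto_congr hid] at hcj
    refine hCcl.mem_of_tendsto hcj ?_
    filter_upwards [hNinf.eventually_ge_atTop t] with j hj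
    exact hCconv.add_smul_sub_mem hy (hpC (φ (ψ j)))
      ⟨div_nonneg ht (hNpos j).le, (div_le_one (hNpos j)).2 hj⟩
  have hBpos := hB xstar hxstarC w hrec hwne
  -- but the inner products along the subsequence are nonpositive
  have hlim : Tendsto (fun j => ⟪gradient f (x (φ (ψ j))), u (ψ j)⟫) atTop
      (𝓝 ⟪gradient f xstar, w⟫) :=
    ((hgc.tendsto xstar).comp (hxφ.comp hψ.tendsto_atTop)).inner huψ
  have hle : ⟪gradient f xstar, w⟫ ≤ 0 := by
    refine le_of_tendsto hlim (Eventually.of_forall fun j => ?_)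
    rw [hu, real_inner_smul_right, ← hv (φ (ψ j))]
    exact mul_nonpos_of_nonneg_of_nonpos (inv_nonneg.2 (norm_nonneg _)) (hvneg _).le
  linarith
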